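/- arXiv:1506.08518 — 2 statements merged into one kernel-verified Lean document; each statement's English description precedes it below -/
import Mathlib

section
/- For a fixed word w and fixed Parikh vector P, there is at most one abelian run with period P starting at each position of w; equivalently, distinct abelian runs with period P have distinct starting positions (and distinct ending positions). -/
open scoped BigOperators

variable {α : Type*} [DecidableEq α] [Fintype α]

/-- Parikh vector of a word: counts of each letter. -/
def parikh (w : List α) (a : α) : ℕ := w.count a

/-- Componentwise containment of Parikh vectors. -/
def PSub (P Q : α → ℕ) : Prop := ∀ a, P a ≤ Q a

/-- Strict containment of Parikh vectors. -/
def PSSub (P Q : α → ℕ) : Prop := PSub P Q ∧ P ≠ Q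

/-- Norm of a Parikh vector: sum of its components. -/
def pnorm (P : α → ℕ) : ℕ := ∑ a, P a

/-- Fragment w[i..j] (both endpoints included). -/
def frag (w : List α) (i j : ℕ) : List α := (w.drop i).take (j + 1 - i)

/-- `IsPF P w k u` : w = u 0 ++ u 1 ++ ⋯ ++ u k is a periodic factorization of w
with respect to P: the cores u 1, …, u (k-1) have Parikh vector P and the head u 0
and tail u k have Parikh vector strictly contained in P. -/
def IsPF (P : α → ℕ) (w : List α) (k : ℕ) (u : ℕ → List α) : Prop :=
  1 ≤ k ∧ w = ((List.range (k + 1)).map u).flatten ∧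
  (∀ i, 0 < i → i < k → parikh (u i) = P) ∧
  PSSub (parikh (u 0)) P ∧ PSSub (parikh (u k)) P

/-- Fragment w[i..j] has abelian period P. -/
def HasPeriod (P : α → ℕ) (w : List α) (i j : ℕ) : Prop :=
  ∃ m u, IsPF P (frag w i j) m u

/-- Fragment w[i..j] has abelian period P anchored at k : there is a periodic
factorization whose cores start (within w) at positions ≡ k (mod |P|). -/
def HasAnchPeriod (P : α → ℕ) (w : List α) (i j k : ℕ) : Prop :=
  ∃ m u, IsPF P (frag w i j) m u ∧ (i + (u 0).length) % pnorm P = k % pnorm P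

/-- Fragment w[i..j] is periodic with period P anchored at k
(factorization with at least two cores). -/
def PeriodicAnch (P : α → ℕ) (w : List α) (i j k : ℕ) : Prop :=
  ∃ m u, 3 ≤ m ∧ IsPF P (frag w i j) m u ∧
    (i + (u 0).length) % pnorm P = k % pnorm P

/-- Fragment w[i..j] is periodic with period P (at least two cores, any anchor). -/
def APeriodic (P : α → ℕ) (w : List α) (i j : ℕ) : Prop :=
  ∃ m u, 3 ≤ m ∧ IsPF P (frag w i j) m u

/-- k-anchored abelian run with period P. -/
def AnchoredRun (P : α → ℕ) (w : List α) (i j k : ℕ) : Prop :=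
  i ≤ j ∧ j < w.length ∧ PeriodicAnch P w i j k ∧
  (i = 0 ∨ ¬ PeriodicAnch P w (i - 1) j k) ∧
  (j + 1 = w.length ∨ ¬ PeriodicAnch P w i (j + 1) k)

/-- Abelian run with period P. -/
def AbelianRun (P : α → ℕ) (w : List α) (i j : ℕ) : Prop :=
  i ≤ j ∧ j < w.length ∧ APeriodic P w i j ∧
  (i = 0 ∨ ¬ APeriodic P w (i - 1) j) ∧
  (j + 1 = w.length ∨ ¬ APeriodic P w i (j + 1))

/-- B_i[k]: the starting position of the longest suffix of w[0..i] having abelian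
period P anchored at k (⊤ = ∞ if no such suffix exists). -/
noncomputable def Bfun (P : α → ℕ) (w : List α) (i k : ℕ) : ℕ∞ :=
  sInf {b : ℕ∞ | ∃ s : ℕ, b = (s : ℕ∞) ∧ s ≤ i + 1 ∧ HasAnchPeriod P w s i k}


set_option linter.deprecated false
set_option linter.unusedSectionVars false
set_option maxHeartbeats 1000000

/- ### auxiliary lemmas -/

lemma length_eq_pnorm_parikh (l : List α) : l.length = pnorm (parikh l) := by
  unfold pnorm parikh
  induction l with
  | nil => simp
  | cons x t ih => simp [List.count_cons, ih, Finset.sum_add_distrib]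

lemma PSSub.exists_lt {Q P : α → ℕ} (h : PSSub Q P) : ∃ a, Q a < P a := by
  by_contra hc
  push_neg at hc
  exact h.2 (funext fun a => le_antisymm (h.1 a) (hc a))

lemma PSSub.pnorm_pos {Q P : α → ℕ} (h : PSSub Q P) : 0 < pnorm P := by
  obtain ⟨a, ha⟩ := h.exists_lt
  have : P a ≤ pnorm P := Finset.single_le_sum (fun i _ => Nat.zero_le _) (Finset.mem_univ a)
  omega

lemma length_lt_of_PSSub {l : List α} {P : α → ℕ} (h : PSSub (parikh l) P) :
    l.length < pnorm P := by
  rw [length_eq_pnorm_parikh l]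
  obtain ⟨a, ha⟩ := h.exists_lt
  exact Finset.sum_lt_sum (fun i _ => h.1 i) ⟨a, Finset.mem_univ a, ha⟩

lemma length_eq_of_parikh_eq {l : List α} {P : α → ℕ} (h : parikh l = P) :
    l.length = pnorm P := by rw [length_eq_pnorm_parikh l, h]

lemma PSSub_of_le_of_length_lt {l : List α} {P : α → ℕ}
    (h1 : ∀ a, l.count a ≤ P a) (h2 : l.length < pnorm P) : PSSub (parikh l) P := by
  refine ⟨h1, fun hEq => ?_⟩
  rw [length_eq_of_parikh_eq hEq] at h2
  omega

lemma parikh_nil_PSSub {P : α → ℕ} (hp : 0 < pnorm P) : PSSub (parikh ([] : List α)) P := by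
  refine PSSub_of_le_of_length_lt (fun a => by simp [List.count_nil]) ?_
  simpa using hp

/- join of an initial segment of blocks -/

lemma join_range_prefix (v : ℕ → List α) {t M : ℕ} (ht : t ≤ M) :
    ((List.range t).map v).flatten <+: ((List.range M).map v).flatten := by
  have h1 : (List.range t).map v = ((List.range M).map v).take t := by
    rw [← List.map_take, List.take_range, Nat.min_eq_left ht]
  refine ⟨(((List.range M).map v).drop t).flatten, ?_⟩
  rw [h1, ← List.flatten_append, List.take_append_drop]

lemma count_join_range (u : ℕ → List α) (a : α) (n : ℕ) :
    (((List.range n).map u).flatten).count a = ∑ t ∈ Finset.range n, (u t).count a := by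
  induction n with
  | zero => simp
  | succ n ih =>
      rw [List.range_succ, List.map_append, List.flatten_append, List.count_append, ih,
        Finset.sum_range_succ]
      simp

section PF
variable {P : α → ℕ} {y : List α} {m' : ℕ} {v : ℕ → List α}

lemma IsPF.core_length (hy : IsPF P y m' v) {t : ℕ} (h1 : 0 < t) (h2 : t < m') :
    (v t).length = pnorm P := length_eq_of_parikh_eq (hy.2.2.1 t h1 h2)

lemma IsPF.len_join (hy : IsPF P y m' v) :
    ∀ t, t ≤ m' - 1 →
      (((List.range (t+1)).map v).flatten).length = (v 0).length + t * pnorm P := by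
  have hm1 : 1 ≤ m' := hy.1
  intro t ht
  induction t with
  | zero => simp [List.range_succ]
  | succ t ih =>
      rw [List.range_succ, List.map_append, List.flatten_append, List.length_append,
        ih (by omega)]
      have : (v (t+1)).length = pnorm P := hy.core_length (by omega) (by omega)
      simp [this]
      ring

lemma IsPF.take_eq (hy : IsPF P y m' v) {t : ℕ} (ht : t ≤ m' - 1) :
    y.take ((v 0).length + t * pnorm P) = ((List.range (t+1)).map v).flatten := by
  have hm1 : 1 ≤ m' := hy.1
  have hpre : ((List.range (t+1)).map v).flatten <+: y := by
    rw [hy.2.1]; exact join_range_prefix v (by omega)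
  have := List.prefix_iff_eq_take.mp hpre
  rw [this, hy.len_join t ht]

lemma IsPF.drop_eq_tail (hy : IsPF P y m' v) :
    y.drop ((v 0).length + (m' - 1) * pnorm P) = v m' := by
  have hm1 : 1 ≤ m' := hy.1
  have h21 : y = ((List.range (m'+1)).map v).flatten := hy.2.1
  have hsplit : y = ((List.range m').map v).flatten ++ v m' := by
    rw [h21, List.range_succ, List.map_append, List.flatten_append]; simp
  have hlen : (((List.range m').map v).flatten).length = (v 0).length + (m' - 1) * pnorm P := by
    have := hy.len_join (m' - 1) le_rfl
    rwa [show m' - 1 + 1 = m' by omega] at this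
  rw [hsplit, ← hlen, List.drop_left]

/-- Truncating a periodic factorization at length `n ≥ |v 0| + 2p` yields a
factorization with at least two cores. -/
lemma IsPF.take_pf (hy : IsPF P y m' v) (hm' : 3 ≤ m') {n : ℕ}
    (hn1 : (v 0).length + 2 * pnorm P ≤ n) (hn2 : n ≤ y.length) :
    ∃ k u, 3 ≤ k ∧ IsPF P (y.take n) k u := by
  set p := pnorm P with hpdef
  have hp : 0 < p := hy.2.2.2.1.pnorm_pos
  set β := (v 0).length with hβ
  set k := min ((n - β) / p) (m' - 1) with hk
  have hk2 : 2 ≤ k := by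
    have h1 : 2 ≤ (n - β) / p := Nat.le_div_iff_mul_le hp |>.mpr (by omega)
    omega
  have hkm : k ≤ m' - 1 := Nat.min_le_right _ _
  have hkp : β + k * p ≤ n := by
    have h1 : k * p ≤ ((n - β) / p) * p := Nat.mul_le_mul_right _ (Nat.min_le_left _ _)
    have h2 : ((n - β) / p) * p ≤ n - β := Nat.div_mul_le_self _ _
    omega
  set T := (y.drop (β + k * p)).take (n - (β + k * p)) with hT
  refine ⟨k + 1, fun t => if t ≤ k then v t else T, by omega, by omega, ?_, ?_, ?_, ?_⟩
  · -- join equation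
    show y.take n = ((List.range (k+1+1)).map (fun t => if t ≤ k then v t else T)).flatten
    have e1 : List.range (k + 1 + 1) = List.range (k + 1) ++ [k + 1] := List.range_succ
    rw [e1, List.map_append, List.flatten_append]
    have e2 : (List.range (k + 1)).map (fun t => if t ≤ k then v t else T)
        = (List.range (k + 1)).map v := by
      apply List.map_congr_left
      intro t htm
      rw [List.mem_range] at htm
      simp [show t ≤ k by omega]
    rw [e2, ← hy.take_eq hkm]
    have e3 : y.take n = y.take (β + k * p) ++ T := by
      rw [hT, ← List.take_add, show β + k * p + (n - (β + k * p)) = n by omega]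
    have e4 : (List.map (fun t => if t ≤ k then v t else T) [k+1]).flatten = T := by
      simp [show ¬ (k + 1 ≤ k) by omega]
    rw [e4, e3]
  · -- cores
    intro t h1 h2
    have ht : t ≤ k := by omega
    simp only [if_pos ht]
    exact hy.2.2.1 t h1 (by omega)
  · -- head
    simp only [if_pos (show (0:ℕ) ≤ k by omega)]
    exact hy.2.2.2.1
  · -- tail
    simp only [if_neg (show ¬ (k + 1 ≤ k) by omega)]
    rcases eq_or_lt_of_le hkm with hEq | hLt
    · -- T is a prefix of the tail block v m'
      have hdrop : y.drop (β + k * p) = v m' := by rw [hEq]; exact hy.drop_eq_tail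
      have hTsub : T.Sublist (v m') := by
        rw [hT, hdrop]; exact List.take_sublist _ _
      have hle : ∀ a, T.count a ≤ P a :=
        fun a => le_trans (hTsub.count_le a) (hy.2.2.2.2.1 a)
      refine ⟨hle, fun hP => ?_⟩
      apply hy.2.2.2.2.2
      funext a
      have h1 : P a ≤ T.count a := by rw [← hP]; rfl
      have h2 := hTsub.count_le a
      have h3 := hy.2.2.2.2.1 a
      exact le_antisymm h3 (by unfold parikh; omega)
    · -- T is a (short) prefix of a core
      have hkq : k = (n - β) / p := by omega
      have hdm := Nat.div_add_mod (n - β) p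
      have hmod : (n - β) % p < p := Nat.mod_lt _ hp
      have hr : n - (β + k * p) < p := by
        have hcm : k * p = p * ((n - β) / p) := by rw [hkq]; ring
        omega
      have hcore : v (k+1) = (y.drop (β + k * p)).take p := by
        have e1 := hy.take_eq (show k + 1 ≤ m' - 1 by omega)
        have e2 := hy.take_eq hkm
        rw [List.range_succ, List.map_append, List.flatten_append, ← e2] at e1
        have e3 : y.take (β + (k+1) * p) = y.take (β + k * p) ++ (y.drop (β + k * p)).take p := by
          rw [← List.take_add]
          congr 1
          ring
        rw [e3] at e1
        have := List.append_cancel_left e1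
        simp at this
        exact this.symm
      have hTeq : T = (v (k+1)).take (n - (β + k * p)) := by
        rw [hcore, List.take_take, Nat.min_eq_left (Nat.le_of_lt hr), hT]
      have hTsub : T.Sublist (v (k+1)) := by
        rw [hTeq]; exact List.take_sublist _ _
      have hle : ∀ a, T.count a ≤ P a := by
        intro a
        have := hTsub.count_le a
        have h2 : parikh (v (k+1)) = P := hy.2.2.1 (k+1) (by omega) (by omega)
        have h3 : (v (k+1)).count a = P a := by rw [← h2]; rfl
        omega
      refine PSSub_of_le_of_length_lt hle ?_
      have : T.length ≤ n - (β + k * p) := by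
        rw [hT]; exact le_trans (List.length_take_le _ _) le_rfl
      omega

end PF

lemma count_x_eq {P : α → ℕ} {x : List α} {m : ℕ} {u : ℕ → List α}
    (hx : IsPF P x m u) (a : α) :
    x.count a = (u 0).count a + (m - 1) * P a + (u m).count a := by
  have hm1 : 1 ≤ m := hx.1
  have h21 : x = ((List.range (m+1)).map u).flatten := hx.2.1
  rw [h21, count_join_range, Finset.sum_range_succ,
    show m = (m - 1) + 1 by omega, Finset.sum_range_succ']
  have hcore : ∀ t ∈ Finset.range (m - 1), (u (t+1)).count a = P a := by
    intro t htm
    rw [Finset.mem_range] at htm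
    have := hx.2.2.1 (t+1) (by omega) (by omega)
    rw [← this]; rfl
  rw [Finset.sum_congr rfl hcore, Finset.sum_const, Finset.card_range]
  have : (m - 1) + 1 = m := by omega
  rw [this]
  simp [mul_comm]
  omega

/-- Key extension lemma: if `x` admits a periodic factorization with ≥ 2 cores and
`x ++ [c]` is a prefix of a word `y` that also admits such a factorization, then
`x ++ [c]` admits one too. -/
lemma IsPF_snoc {P : α → ℕ} {x y : List α} {c : α} {m m' : ℕ} {u v : ℕ → List α}
    (hx : IsPF P x m u) (hm : 3 ≤ m) (hy : IsPF P y m' v) (hm' : 3 ≤ m')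
    (hpre : x ++ [c] <+: y) :
    ∃ k w, 3 ≤ k ∧ IsPF P (x ++ [c]) k w := by
  set p := pnorm P with hpdef
  have hp : 0 < p := hx.2.2.2.1.pnorm_pos
  have hx21 : x = ((List.range (m+1)).map u).flatten := hx.2.1
  have hxsplit : x = ((List.range m).map u).flatten ++ u m := by
    rw [hx21, List.range_succ, List.map_append, List.flatten_append]; simp
  by_cases h1 : ∀ a, (u m ++ [c]).count a ≤ P a
  · by_cases h2 : parikh (u m ++ [c]) = P
    · -- promote the extended tail to a core, empty tail
      refine ⟨m + 1, fun t => if t < m then u t else if t = m then u m ++ [c] else [],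
        by omega, by omega, ?_, ?_, ?_, ?_⟩
      · show x ++ [c] = ((List.range (m+1+1)).map
          (fun t => if t < m then u t else if t = m then u m ++ [c] else [])).flatten
        rw [List.range_succ, List.map_append, List.flatten_append,
          List.range_succ, List.map_append, List.flatten_append]
        have e1 : (List.range m).map
            (fun t => if t < m then u t else if t = m then u m ++ [c] else [])
            = (List.range m).map u := by
          apply List.map_congr_left
          intro t htm
          rw [List.mem_range] at htm
          simp [htm]
        rw [e1]
        simp [show ¬ (m < m) by omega, show ¬ (m + 1 < m) by omega,
          show m + 1 ≠ m by omega, hxsplit]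
      · intro t ht1 ht2
        by_cases htm : t < m
        · simp only [if_pos htm]
          exact hx.2.2.1 t ht1 htm
        · have : t = m := by omega
          simp only [this, if_neg (show ¬ (m < m) by omega), if_pos rfl]
          exact h2
      · simp only [if_pos (show 0 < m by omega)]
        exact hx.2.2.2.1
      · simp only [if_neg (show ¬ (m + 1 < m) by omega),
          if_neg (show ¬ (m + 1 = m) by omega)]
        exact parikh_nil_PSSub hp
    · -- just extend the tail
      refine ⟨m, fun t => if t = m then u m ++ [c] else u t, hm, hx.1, ?_, ?_, ?_, ?_⟩
      · show x ++ [c] = ((List.range (m+1)).map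
          (fun t => if t = m then u m ++ [c] else u t)).flatten
        rw [List.range_succ, List.map_append, List.flatten_append]
        have e1 : (List.range m).map (fun t => if t = m then u m ++ [c] else u t)
            = (List.range m).map u := by
          apply List.map_congr_left
          intro t htm
          rw [List.mem_range] at htm
          simp [show t ≠ m by omega]
        rw [e1]
        simp [hxsplit]
      · intro t ht1 ht2
        simp only [if_neg (show t ≠ m by omega)]
        exact hx.2.2.1 t ht1 ht2
      · simp only [if_neg (show (0:ℕ) ≠ m by omega)]
        exact hx.2.2.2.1
      · simp only [if_pos rfl]
        exact ⟨h1, h2⟩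
  · -- the extended tail overflows at some letter: use the other factorization
    push_neg at h1
    obtain ⟨a, ha⟩ := h1
    have hpe : x ++ [c] = y.take (x.length + 1) := by
      have := List.prefix_iff_eq_take.mp hpre
      rwa [List.length_append, List.length_singleton] at this
    have hylen : x.length + 1 ≤ y.length := by
      have := hpre.length_le
      rwa [List.length_append, List.length_singleton] at this
    by_cases hn : (v 0).length + 2 * p ≤ x.length + 1
    · obtain ⟨k, w, hk, hPF⟩ := hy.take_pf hm' hn hylen
      exact ⟨k, w, hk, by rwa [← hpe] at hPF⟩
    · -- contradiction
      exfalso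
      have hum : (u m).count a ≤ P a := hx.2.2.2.2.1 a
      have hcnt : (x ++ [c]).count a = x.count a + (u m ++ [c]).count a - (u m).count a := by
        rw [List.count_append, List.count_append]
        omega
      have hxa := count_x_eq hx a
      -- upper bound via y
      have hsub : (x ++ [c]).Sublist (y.take ((v 0).length + 2 * p)) := by
        have e : y.take (x.length + 1) = (y.take ((v 0).length + 2 * p)).take (x.length + 1) := by
          rw [List.take_take, Nat.min_eq_left (by omega : x.length + 1 ≤ (v 0).length + 2 * p)]
        rw [hpe, e]
        exact List.take_sublist _ _
      have hle := hsub.count_le a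
      have htake := hy.take_eq (show 2 ≤ m' - 1 by omega)
      have hyc : (y.take ((v 0).length + 2 * p)).count a = (v 0).count a + 2 * P a := by
        rw [htake, count_join_range, Finset.sum_range_succ, Finset.sum_range_succ,
          Finset.sum_range_one]
        have e1 : (v 1).count a = P a := by
          rw [← hy.2.2.1 1 (by omega) (by omega)]; rfl
        have e2 : (v 2).count a = P a := by
          rw [← hy.2.2.1 2 (by omega) (by omega)]; rfl
        rw [e1, e2]; ring
      have hv0 : (v 0).count a ≤ P a := hy.2.2.2.1.1 a
      have hs : ([c] : List α).count a ≤ 1 := le_trans List.count_le_length (by simp)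
      rw [List.count_append] at ha
      have huma : (u m).count a = P a := by omega
      have hsa : ([c] : List α).count a = 1 := by omega
      have hlhs : (x ++ [c]).count a = (u 0).count a + (m - 1) * P a + P a + 1 := by
        rw [List.count_append, hsa, hxa, huma]
      have hmul : 2 * P a ≤ (m - 1) * P a := Nat.mul_le_mul_right _ (by omega)
      omega

lemma parikh_reverse (l : List α) : parikh l.reverse = parikh l := by
  funext a
  exact List.count_reverse

lemma IsPF_reverse {P : α → ℕ} {x : List α} {m : ℕ} {u : ℕ → List α}
    (hx : IsPF P x m u) : IsPF P x.reverse m (fun t => (u (m - t)).reverse) := by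
  refine ⟨hx.1, ?_, ?_, ?_, ?_⟩
  · show x.reverse = ((List.range (m+1)).map (fun t => (u (m - t)).reverse)).flatten
    have h21 : x = ((List.range (m+1)).map u).flatten := hx.2.1
    rw [h21, List.reverse_flatten, ← List.map_reverse]
    have hrev : (List.range (m+1)).reverse = (List.range (m+1)).map (fun t => m - t) := by
      rw [List.range_eq_range', List.reverse_range', ← List.range_eq_range']
      congr 1
      funext t
      omega
    rw [← List.map_reverse, hrev]
    simp [List.map_map, Function.comp_def]
  · intro t ht1 ht2
    rw [parikh_reverse]
    exact hx.2.2.1 (m - t) (by omega) (by omega)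
  · simp only [Nat.sub_zero, parikh_reverse]
    exact hx.2.2.2.2
  · simp only [Nat.sub_self, parikh_reverse]
    exact hx.2.2.2.1

/- ### fragment lemmas -/

lemma frag_snoc (w : List α) {i j : ℕ} (hij : i ≤ j + 1) (hj : j + 1 < w.length) :
    ∃ c, frag w i (j+1) = frag w i j ++ [c] := by
  unfold frag
  have h2 : j + 1 - i < (w.drop i).length := by
    rw [List.length_drop]; omega
  refine ⟨(w.drop i)[j + 1 - i], ?_⟩
  rw [show j + 1 + 1 - i = (j + 1 - i) + 1 by omega, ← List.take_concat_get h2]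
  simp

lemma frag_prefix (w : List α) (i : ℕ) {j j' : ℕ} (h : j ≤ j') :
    frag w i j <+: frag w i j' := by
  unfold frag
  rw [show j + 1 - i = min (j + 1 - i) (j' + 1 - i) by omega, ← List.take_take]
  exact List.take_prefix _ _

lemma frag_cons (w : List α) {i j : ℕ} (hi : 1 ≤ i) (hij : i ≤ j + 1)
    (hiw : i - 1 < w.length) :
    ∃ c, frag w (i-1) j = c :: frag w i j := by
  unfold frag
  have hd : w.drop (i-1) = w[i-1] :: w.drop i := by
    rw [List.drop_eq_getElem_cons hiw, show i - 1 + 1 = i from by omega]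
  rw [hd, show j + 1 - (i - 1) = (j + 1 - i) + 1 by omega, List.take_succ_cons]
  exact ⟨_, rfl⟩

lemma frag_suffix (w : List α) {i i' j : ℕ} (h : i' ≤ i) :
    frag w i j <:+ frag w i' j := by
  have : frag w i j = (frag w i' j).drop (i - i') := by
    unfold frag
    rw [List.drop_take, List.drop_drop, show i' + (i - i') = i by omega,
      show j + 1 - i' - (i - i') = j + 1 - i by omega]
  rw [this]
  exact List.drop_suffix _ _

/- ### extension lemmas -/

lemma APeriodic_ext_right {P : α → ℕ} {w : List α} {i j j' : ℕ}
    (h1 : APeriodic P w i j) (h2 : APeriodic P w i j') (hij : i ≤ j)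
    (hjj : j < j') (hj' : j' < w.length) : APeriodic P w i (j+1) := by
  obtain ⟨m, u, hm, hxm⟩ := h1
  obtain ⟨m', v, hm', hym⟩ := h2
  obtain ⟨c, hc⟩ := frag_snoc w (by omega : i ≤ j + 1) (by omega : j + 1 < w.length)
  have hpre : frag w i (j+1) <+: frag w i j' := frag_prefix w i (by omega)
  rw [hc] at hpre
  obtain ⟨k, u', hk, hPF⟩ := IsPF_snoc hxm hm hym hm' hpre
  exact ⟨k, u', hk, by rwa [hc]⟩

lemma APeriodic_ext_left {P : α → ℕ} {w : List α} {i i' j : ℕ}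
    (h1 : APeriodic P w i j) (h2 : APeriodic P w i' j) (hii : i' < i)
    (hij : i ≤ j + 1) (hiw : i - 1 < w.length) : APeriodic P w (i-1) j := by
  obtain ⟨m, u, hm, hxm⟩ := h1
  obtain ⟨m', v, hm', hym⟩ := h2
  obtain ⟨c, hc⟩ := frag_cons w (j := j) (by omega : 1 ≤ i) (by omega) hiw
  have hsuf : frag w (i-1) j <:+ frag w i' j := frag_suffix w (by omega)
  have hxr := IsPF_reverse hxm
  have hyr := IsPF_reverse hym
  have hpre : (frag w i j).reverse ++ [c] <+: (frag w i' j).reverse := by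
    rw [← List.reverse_cons, ← hc]
    exact List.reverse_prefix.mpr hsuf
  obtain ⟨k, u', hk, hPF⟩ := IsPF_snoc hxr hm hyr hm' hpre
  refine ⟨k, fun t => (u' (k - t)).reverse, hk, ?_⟩
  have hPF' := IsPF_reverse hPF
  rwa [← List.reverse_cons, ← hc, List.reverse_reverse] at hPF'

/- ### main theorem pieces -/

lemma run_aux_right {P : α → ℕ} {w : List α} {i j j' : ℕ}
    (h : AbelianRun P w i j) (h' : AbelianRun P w i j') (hjj : j < j') : False := by
  obtain ⟨hij, hjw, hap, _, hmax⟩ := h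
  obtain ⟨hij', hjw', hap', _, _⟩ := h'
  rcases hmax with he | hne
  · omega
  · exact hne (APeriodic_ext_right hap hap' hij hjj hjw')

lemma run_aux_left {P : α → ℕ} {w : List α} {i i' j : ℕ}
    (h : AbelianRun P w i j) (h' : AbelianRun P w i' j) (hii : i' < i) : False := by
  obtain ⟨hij, hjw, hap, hmax, _⟩ := h
  obtain ⟨hij', hjw', hap', _, _⟩ := h'
  rcases hmax with he | hne
  · omega
  · exact hne (APeriodic_ext_left hap hap' hii (by omega) (by omega))

/-- For a fixed Parikh vector P, there is at most one abelian run with period P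
starting (and ending) at each position of w. -/
theorem abelianRun_unique_start (P : α → ℕ) (w : List α) (i j i' j' : ℕ)
    (h : AbelianRun P w i j) (h' : AbelianRun P w i' j') :
    (i = i' → j = j') ∧ (j = j' → i = i') := by
  constructor
  · intro hii
    subst hii
    rcases lt_trichotomy j j' with hlt | heq | hgt
    · exact (run_aux_right h h' hlt).elim
    · exact heq
    · exact (run_aux_right h' h hgt).elim
  · intro hjj
    subst hjj
    rcases lt_trichotomy i i' with hlt | heq | hgt
    · exact (run_aux_left h' h hlt).elim
    · exact heq
    · exact (run_aux_left h h' hgt).elim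
end

section
/- Let i-p < k ≤ i. A fragment w[b..i-1] is a k-anchored abelian run with period P (of norm p) if and only if B_{i-1}[k] = b, b ≤ k - 2p, and B_i[k] > b. -/
open scoped BigOperators

variable {α : Type*} [DecidableEq α] [Fintype α]

def seg (w : List α) (a b : ℕ) : List α := (w.drop a).take (b - a)

lemma seg_length_le (w : List α) (a b : ℕ) : (seg w a b).length ≤ b - a := by
  simp [seg]

lemma seg_length (w : List α) {a b : ℕ} (hab : a ≤ b) (hb : b ≤ w.length) :
    (seg w a b).length = b - a := by
  simp [seg]; omega

lemma seg_append (w : List α) {a b c : ℕ} (h1 : a ≤ b) (h2 : b ≤ c) :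
    seg w a b ++ seg w b c = seg w a c := by
  have hd : w.drop b = (w.drop a).drop (b - a) := by rw [List.drop_drop]; congr 1; omega
  rw [seg, seg, seg, hd, show c - a = (b - a) + (c - b) by omega, List.take_add]

lemma take_seg (w : List α) {a b : ℕ} (n : ℕ) (h : n ≤ b - a) :
    (seg w a b).take n = seg w a (a + n) := by
  rw [seg, seg, List.take_take]
  congr 1; omega

lemma drop_seg (w : List α) (a b n : ℕ) :
    (seg w a b).drop n = seg w (a + n) b := by
  rw [seg, seg, List.drop_take, List.drop_drop]
  congr 1 <;> omega

lemma parikh_append (x y : List α) (a : α) : parikh (x ++ y) a = parikh x a + parikh y a := by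
  simp [parikh]

lemma pnorm_parikh (v : List α) : pnorm (parikh v) = v.length := by
  classical
  induction v with
  | nil => simp [pnorm, parikh]
  | cons x v ih =>
    simp only [pnorm, parikh, List.count_cons] at *
    rw [Finset.sum_add_distrib, ih]
    simp [add_comm]

lemma length_lt_of_pssub {P : α → ℕ} {v : List α} (h : PSSub (parikh v) P) :
    v.length < pnorm P := by
  rw [← pnorm_parikh v]
  obtain ⟨hle, hne⟩ := h
  have hex : ∃ a, parikh v a ≠ P a := by
    by_contra hc; push_neg at hc; exact hne (funext hc)
  obtain ⟨a, ha⟩ := hex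
  exact Finset.sum_lt_sum (fun i _ => hle i) ⟨a, Finset.mem_univ a, lt_of_le_of_ne (hle a) ha⟩

lemma length_eq_of_parikh {P : α → ℕ} {v : List α} (h : parikh v = P) : v.length = pnorm P := by
  rw [← pnorm_parikh v, h]

lemma pssub_of_le_of_lt {P : α → ℕ} {v : List α} (hle : ∀ a, parikh v a ≤ P a)
    (hlen : v.length < pnorm P) : PSSub (parikh v) P := by
  refine ⟨hle, fun heq => ?_⟩
  have := pnorm_parikh v
  rw [heq] at this; omega

set_option linter.unusedSectionVars false
set_option linter.deprecated false

lemma join_eq_flatten' (l : List (List α)) : l.flatten = l.flatten := rfl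

lemma join_range_succ_left (u : ℕ → List α) (n : ℕ) :
    ((List.range (n+1)).map u).flatten = u 0 ++ ((List.range n).map (fun t => u (t+1))).flatten := by
  rw [List.range_succ_eq_map]
  simp [List.map_map, Function.comp_def]

lemma mono_aux (q : ℕ → ℕ) : ∀ n, (∀ t, t < n → q t ≤ q (t+1)) → q 0 ≤ q n
  | 0, _ => le_rfl
  | (n+1), h => (mono_aux q n fun t ht => h t (by omega)).trans (h n (by omega))

lemma join_eq_seg (w : List α) (q : ℕ → ℕ) :
    ∀ n, (∀ t, t < n → q t ≤ q (t+1)) →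
    ((List.range n).map (fun t => seg w (q t) (q (t+1)))).flatten = seg w (q 0) (q n)
  | 0, _ => by simp [seg]
  | (n+1), h => by
    rw [List.range_succ, List.map_append, List.flatten_append,
      join_eq_seg w q n (fun t ht => h t (by omega))]
    simp only [List.map_cons, List.map_nil, List.flatten_cons, List.flatten_nil, List.append_nil]
    exact seg_append w (mono_aux q n (fun t ht => h t (by omega))) (h n (by omega))

lemma eq_seg_of_join (w : List α) :
    ∀ (n : ℕ) (u : ℕ → List α) (s E : ℕ),
    ((List.range n).map u).flatten = seg w s E →
    ∀ t, t < n → u t = seg w (s + (((List.range t).map u).flatten).length)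
                         (s + (((List.range (t+1)).map u).flatten).length) := by
  intro n
  induction n with
  | zero => intro u s E _ t ht; omega
  | succ n ih =>
    intro u s E hj t ht
    have hj1 : u 0 ++ ((List.range n).map (fun t => u (t+1))).flatten = seg w s E := by
      rw [← join_range_succ_left]; exact hj
    have hlen : (u 0).length ≤ E - s := by
      calc (u 0).length ≤ (seg w s E).length := by
            rw [← hj1]; simp
        _ ≤ E - s := seg_length_le w s E
    have h1 : (seg w s E).take (u 0).length = u 0 := by rw [← hj1, List.take_left]
    rw [take_seg w _ hlen] at h1
    have hu0 : u 0 = seg w s (s + (u 0).length) := h1.symm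
    have hrest : ((List.range n).map (fun t => u (t+1))).flatten = seg w (s + (u 0).length) E := by
      have h2 : (seg w s E).drop (u 0).length = ((List.range n).map (fun t => u (t+1))).flatten := by
        rw [← hj1, List.drop_left]
      rw [← h2, drop_seg]
    have hL : ∀ j, (((List.range (j+1)).map u).flatten).length
        = (u 0).length + (((List.range j).map (fun t => u (t+1))).flatten).length := by
      intro j; rw [join_range_succ_left]; simp
    match t with
    | 0 => simpa using hu0
    | (t+1) =>
      have hih := ih (fun t => u (t+1)) (s + (u 0).length) E hrest t (by omega)
      rw [hL t, hL (t+1)]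
      convert hih using 2 <;> omega

-- characterization data
structure SegChar (P : α → ℕ) (w : List α) (s E c e : ℕ) : Prop where
  hsc : s ≤ c
  hce : c ≤ e
  heE : e ≤ E
  hcs : c < s + pnorm P
  hEe : E < e + pnorm P
  hdvd : pnorm P ∣ e - c
  hhead : PSSub (parikh (seg w s c)) P
  htail : PSSub (parikh (seg w e E)) P
  hcore : ∀ t, c + pnorm P * t + pnorm P ≤ e →
      parikh (seg w (c + pnorm P * t) (c + pnorm P * t + pnorm P)) = P

lemma frag_eq_seg (w : List α) (s E : ℕ) (hE : 1 ≤ E) : frag w s (E-1) = seg w s E := by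
  unfold frag seg; congr 1; omega

lemma segchar_of_isPF {P : α → ℕ} {w : List α} {s E m : ℕ} {u : ℕ → List α}
    (hp : 0 < pnorm P) (hsE : s ≤ E) (hE1 : 1 ≤ E) (hEw : E ≤ w.length)
    (hpf : IsPF P (frag w s (E-1)) m u) :
    SegChar P w s E (s + (u 0).length) (s + (u 0).length + (m-1) * pnorm P) := by
  obtain ⟨hm1, hjoin, hcores, hh, ht⟩ := hpf
  rw [frag_eq_seg w s E hE1, join_eq_flatten'] at hjoin
  set L : ℕ → ℕ := fun j => (((List.range j).map u).flatten).length with hLdef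
  have hu : ∀ t, t < m + 1 → u t = seg w (s + L t) (s + L (t+1)) :=
    eq_seg_of_join w (m+1) u s E hjoin.symm
  have hLsucc : ∀ j, L (j+1) = L j + (u j).length := by
    intro j
    simp only [hLdef, List.range_succ, List.map_append, List.flatten_append]
    simp
  have hL0 : L 0 = 0 := by simp [hLdef]
  have hu0len : (u 0).length < pnorm P := length_lt_of_pssub hh
  have humlen : (u m).length < pnorm P := length_lt_of_pssub ht
  have hL : ∀ j, j ≤ m - 1 → L (j+1) = (u 0).length + j * pnorm P := by
    intro j
    induction j with
    | zero => intro _; rw [hLsucc, hL0]; simp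
    | succ j ihj =>
      intro hj
      rw [hLsucc, ihj (by omega), length_eq_of_parikh (hcores (j+1) (by omega) (by omega))]
      ring
  have hLm : L m = (u 0).length + (m-1) * pnorm P := by
    have := hL (m-1) le_rfl
    rwa [show m - 1 + 1 = m by omega] at this
  have hLtot : L (m+1) = E - s := by
    rw [hLdef]; simp only []; rw [← hjoin, seg_length w hsE hEw]
  have hLmum : L (m+1) = L m + (u m).length := hLsucc m
  have hcE : s + (u 0).length + (m-1) * pnorm P ≤ E := by omega
  have hu0' : u 0 = seg w s (s + (u 0).length) := by
    have := hu 0 (by omega)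
    rwa [hL0, hLsucc 0, hL0, add_zero, zero_add] at this
  have hum : u m = seg w (s + (u 0).length + (m-1) * pnorm P) E := by
    have := hu m (by omega)
    rw [hLm, hLtot] at this
    rw [this]; congr 1 <;> omega
  have hcomm : pnorm P * (m-1) = (m-1) * pnorm P := by ring
  refine ⟨by omega, by omega, hcE, by omega, by omega, ⟨m-1, by omega⟩, ?_, ?_, ?_⟩
  · rw [← hu0']; exact hh
  · rw [← hum]; exact ht
  · intro t htle
    have hb1 : pnorm P * t = t * pnorm P := by ring
    have hb2 : pnorm P * (t+1) = pnorm P * t + pnorm P := by ring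
    have hb3 : (t+1) * pnorm P = pnorm P * (t+1) := by ring
    have htm : t + 2 ≤ m := by
      have h1 : pnorm P * (t+1) ≤ pnorm P * (m-1) := by omega
      have := Nat.le_of_mul_le_mul_left h1 hp
      omega
    have hcore := hcores (t+1) (by omega) (by omega)
    have huts := hu (t+1) (by omega)
    rw [hL t (by omega), hL (t+1) (by omega)] at huts
    rw [huts] at hcore
    have e1 : s + ((u 0).length + t * pnorm P) = s + (u 0).length + pnorm P * t := by ring
    have e2 : s + ((u 0).length + (t+1) * pnorm P) = s + (u 0).length + pnorm P * t + pnorm P := by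
      ring
    rw [e1, e2] at hcore
    exact hcore

lemma eq_of_mod_eq' {p a b : ℕ} (hp : 0 < p) (h : a % p = b % p)
    (h1 : a < b + p) (h2 : b < a + p) : a = b := by
  rcases Nat.le_total a b with hab | hab
  · have hd : p ∣ b - a := (Nat.modEq_iff_dvd' hab).mp h
    have : b - a = 0 ∨ p ≤ b - a :=
      (Nat.eq_zero_or_pos (b - a)).imp id fun h' => Nat.le_of_dvd h' hd
    omega
  · have hd : p ∣ a - b := (Nat.modEq_iff_dvd' hab).mp h.symm
    have : a - b = 0 ∨ p ≤ a - b :=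
      (Nat.eq_zero_or_pos (a - b)).imp id fun h' => Nat.le_of_dvd h' hd
    omega

lemma le_of_mod_eq' {p a b : ℕ} (hp : 0 < p) (h : a % p = b % p) (h1 : b < a + p) : b ≤ a := by
  by_contra hc
  push_neg at hc
  have hd : p ∣ b - a := (Nat.modEq_iff_dvd' (le_of_lt hc)).mp h
  have : b - a = 0 ∨ p ≤ b - a :=
    (Nat.eq_zero_or_pos (b - a)).imp id fun h' => Nat.le_of_dvd h' hd
  omega

lemma two_p_le {p c e : ℕ} (hp : 0 < p) (hdvd : p ∣ e - c) (hce : c ≤ e)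
    (h1 : c + p < e) : c + 2 * p ≤ e := by
  obtain ⟨q, hq⟩ := hdvd
  have h2 : 2 ≤ q := by
    by_contra hq2
    push_neg at hq2
    interval_cases q <;> omega
  have : p * 2 ≤ p * q := Nat.mul_le_mul_left p h2
  omega

lemma hasAnch_of_segchar {P : α → ℕ} {w : List α} {s E c e k : ℕ}
    (hp : 0 < pnorm P) (hE1 : 1 ≤ E) (hEw : E ≤ w.length)
    (h : SegChar P w s E c e) (hmod : c % pnorm P = k % pnorm P) :
    HasAnchPeriod P w s (E-1) k ∧ (c + 2 * pnorm P ≤ e → PeriodicAnch P w s (E-1) k) := by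
  obtain ⟨d, hd⟩ := h.hdvd
  have hce := h.hce
  have heE := h.heE
  have hsc := h.hsc
  have hcs := h.hcs
  have heEe := h.hEe
  have he : e = c + pnorm P * d := by omega
  set m := d + 1 with hmdef
  set q : ℕ → ℕ := fun t => if t = 0 then s else if t ≤ m then c + pnorm P * (t-1) else E
    with hqdef
  set u : ℕ → List α := fun t => seg w (q t) (q (t+1)) with hudef
  have hq0 : q 0 = s := by simp [hqdef]
  have hqm : ∀ t, 1 ≤ t → t ≤ m → q t = c + pnorm P * (t-1) := by
    intro t h1 h2
    simp only [hqdef]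
    rw [if_neg (by omega), if_pos h2]
  have hqE : q (m+1) = E := by
    simp only [hqdef]
    rw [if_neg (by omega), if_neg (by omega)]
  have hq1 : q 1 = c := by rw [hqm 1 le_rfl (by omega)]; simp
  have hqmm : q m = e := by
    rw [hqm m (by omega) le_rfl, show m - 1 = d by omega]
    omega
  have hmono : ∀ t, t < m + 1 → q t ≤ q (t+1) := by
    intro t ht
    rcases Nat.eq_zero_or_pos t with rfl | htpos
    · rw [hq0, hq1]; exact hsc
    · rcases Nat.lt_or_ge (t+1) (m+1) with h1 | h1
      · rw [hqm t htpos (by omega), hqm (t+1) (by omega) (by omega)]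
        have : pnorm P * (t-1) ≤ pnorm P * (t+1-1) := Nat.mul_le_mul_left _ (by omega)
        omega
      · have htm : t = m := by omega
        subst htm
        rw [hqmm, hqE]
        exact heE
  have hjoin : ((List.range (m+1)).map u).flatten = seg w s E := by
    rw [hudef, join_eq_seg w q (m+1) hmono, hq0, hqE]
  have hulen : (u 0).length = c - s := by
    rw [hudef]; simp only []
    rw [hq0, hq1, seg_length w hsc (by omega)]
  have hanch : (s + (u 0).length) % pnorm P = k % pnorm P := by
    rw [hulen, show s + (c - s) = c by omega]
    exact hmod
  have hispf : IsPF P (frag w s (E-1)) m u := by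
    refine ⟨by omega, ?_, ?_, ?_, ?_⟩
    · rw [frag_eq_seg w s E hE1, join_eq_flatten', hjoin]
    · intro t ht0 htm
      obtain ⟨t', rfl⟩ : ∃ t', t = t' + 1 := ⟨t - 1, by omega⟩
      have e1 : q (t'+1) = c + pnorm P * t' := by
        rw [hqm (t'+1) (by omega) (by omega), show t'+1-1 = t' by omega]
      have e2 : q (t'+1+1) = c + pnorm P * t' + pnorm P := by
        rw [hqm (t'+1+1) (by omega) (by omega), show t'+1+1-1 = t'+1 by omega]
        ring
      show parikh (seg w (q (t'+1)) (q (t'+1+1))) = P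
      rw [e1, e2]
      refine h.hcore t' ?_
      have h2 : pnorm P * (t'+1) ≤ pnorm P * d := Nat.mul_le_mul_left _ (by omega)
      have h3 : pnorm P * (t'+1) = pnorm P * t' + pnorm P := by ring
      omega
    · show PSSub (parikh (seg w (q 0) (q 1))) P
      rw [hq0, hq1]; exact h.hhead
    · show PSSub (parikh (seg w (q m) (q (m+1)))) P
      rw [hqmm, hqE]; exact h.htail
  refine ⟨⟨m, u, hispf, hanch⟩, fun h2p => ⟨m, u, ?_, hispf, hanch⟩⟩
  have : pnorm P * 2 ≤ pnorm P * d := by omega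
  have := Nat.le_of_mul_le_mul_left this hp
  omega

lemma round_up {p s c : ℕ} (hp : 0 < p) (hcs : c < s + p) :
    ∃ j, s ≤ c + p * j ∧ c + p * j < s + p := by
  rcases Nat.le_total s c with hcase | hcase
  · exact ⟨0, by omega, by omega⟩
  · obtain ⟨x, hx⟩ : ∃ x, s = c + x := ⟨s - c, by omega⟩
    obtain ⟨p', hp'⟩ : ∃ p', p = p' + 1 := ⟨p - 1, by omega⟩
    obtain ⟨q, r, hqr, hrlt⟩ : ∃ q r, p * q + r = x + p' ∧ r < p :=
      ⟨_, _, Nat.div_add_mod _ _, Nat.mod_lt _ hp⟩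
    refine ⟨q, by omega, by omega⟩

lemma segchar_mono {P : α → ℕ} {w : List α} {s E c e s' : ℕ}
    (hp : 0 < pnorm P) (hEw : E ≤ w.length)
    (h : SegChar P w s E c e) (hss' : s ≤ s') (hs'e : s' ≤ e) :
    ∃ c', SegChar P w s' E c' e ∧ c ≤ c' ∧ c' % pnorm P = c % pnorm P := by
  obtain ⟨d, hd⟩ := h.hdvd
  have hce := h.hce
  have heE := h.heE
  have hsc := h.hsc
  have hcs := h.hcs
  have hEe := h.hEe
  obtain ⟨j, hj1, hj2⟩ := round_up (p := pnorm P) (s := s') (c := c) hp (by omega)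
  set c' := c + pnorm P * j with hc'def
  have hjd : j ≤ d := by
    have h1 : pnorm P * (d+1) = pnorm P * d + pnorm P := by ring
    have h2 : pnorm P * j < pnorm P * (d+1) := by omega
    have := Nat.lt_of_mul_lt_mul_left h2
    omega
  have hc'e : c' ≤ e := by
    have := Nat.mul_le_mul_left (pnorm P) hjd
    omega
  have hmulsub : pnorm P * (d - j) = pnorm P * d - pnorm P * j := by
    have h1 : pnorm P * (d - j) + pnorm P * j = pnorm P * d := by
      rw [← Nat.mul_add, Nat.sub_add_cancel hjd]
    omega
  have hle : ∀ a, parikh (seg w s' c') a ≤ P a := by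
    rcases Nat.eq_zero_or_pos j with hj0 | hjpos
    · have hc'c : c' = c := by rw [hc'def, hj0]; simp
      intro a
      have h1 := h.hhead.1 a
      rw [← seg_append w hss' (show s' ≤ c by omega), parikh_append] at h1
      rw [hc'c]
      omega
    · obtain ⟨j', rfl⟩ : ∃ j', j = j' + 1 := ⟨j - 1, by omega⟩
      intro a
      have hmul : pnorm P * (j' + 1) = pnorm P * j' + pnorm P := by ring
      have hcore := h.hcore j' (by omega)
      have hsplit : seg w (c + pnorm P * j') s' ++ seg w s' c'
          = seg w (c + pnorm P * j') (c + pnorm P * j' + pnorm P) := by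
        rw [show c + pnorm P * j' + pnorm P = c' by omega]
        exact seg_append w (by omega) (by omega)
      have hpar := congrFun hcore a
      rw [← hsplit, parikh_append] at hpar
      omega
  have hlen : (seg w s' c').length < pnorm P :=
    lt_of_le_of_lt (seg_length_le w s' c') (by omega)
  refine ⟨c', ⟨by omega, hc'e, heE, by omega, hEe, ⟨d - j, by omega⟩,
    pssub_of_le_of_lt hle hlen, h.htail, ?_⟩, by omega, ?_⟩
  · intro t ht
    have e3 : c' + pnorm P * t = c + pnorm P * (j + t) := by
      rw [Nat.mul_add]; omega
    rw [e3]
    exact h.hcore (j + t) (by omega)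
  · rw [hc'def]
    exact Nat.add_mul_mod_self_left c (pnorm P) j

lemma hasAnch_of_periodicAnch {P : α → ℕ} {w : List α} {s j k : ℕ}
    (h : PeriodicAnch P w s j k) : HasAnchPeriod P w s j k := by
  obtain ⟨m, u, _, h1, h2⟩ := h
  exact ⟨m, u, h1, h2⟩

lemma segchar_of_hasAnch {P : α → ℕ} {w : List α} {s E k : ℕ}
    (hp : 0 < pnorm P) (hsE : s ≤ E) (hE1 : 1 ≤ E) (hEw : E ≤ w.length)
    (h : HasAnchPeriod P w s (E-1) k) :
    ∃ c e, SegChar P w s E c e ∧ c % pnorm P = k % pnorm P := by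
  obtain ⟨m, u, hpf, hmod⟩ := h
  exact ⟨s + (u 0).length, _, segchar_of_isPF hp hsE hE1 hEw hpf, hmod⟩

lemma segchar_of_periodicAnch {P : α → ℕ} {w : List α} {s E k : ℕ}
    (hp : 0 < pnorm P) (hsE : s ≤ E) (hE1 : 1 ≤ E) (hEw : E ≤ w.length)
    (h : PeriodicAnch P w s (E-1) k) :
    ∃ c e, SegChar P w s E c e ∧ c % pnorm P = k % pnorm P ∧ c + 2 * pnorm P ≤ e := by
  obtain ⟨m, u, hm3, hpf, hmod⟩ := h
  refine ⟨s + (u 0).length, _, segchar_of_isPF hp hsE hE1 hEw hpf, hmod, ?_⟩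
  have : 2 * pnorm P ≤ (m-1) * pnorm P := Nat.mul_le_mul_right _ (by omega)
  omega

lemma Bfun_le {P : α → ℕ} {w : List α} {j k : ℕ} {s : ℕ} (hs : s ≤ j + 1)
    (h : HasAnchPeriod P w s j k) : Bfun P w j k ≤ (s : ℕ∞) := by
  unfold Bfun
  exact sInf_le ⟨s, rfl, hs, h⟩

lemma lt_Bfun_iff {P : α → ℕ} {w : List α} {j k b : ℕ} :
    ((b : ℕ∞) < Bfun P w j k) ↔ ∀ s : ℕ, s ≤ b → s ≤ j + 1 → ¬HasAnchPeriod P w s j k := by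
  constructor
  · intro h s hsb hsj hanch
    have h1 : Bfun P w j k ≤ (s : ℕ∞) := Bfun_le hsj hanch
    have h2 : (s : ℕ∞) ≤ (b : ℕ∞) := by exact_mod_cast hsb
    exact absurd (lt_of_lt_of_le (lt_of_lt_of_le h h1) h2) (lt_irrefl _)
  · intro h
    have h1 : ((b+1 : ℕ) : ℕ∞) ≤ Bfun P w j k := by
      unfold Bfun
      apply le_sInf
      rintro x ⟨s, rfl, hs, hanch⟩
      have : ¬ s ≤ b := fun hc => h s hc hs hanch
      exact_mod_cast by omega
    refine lt_of_lt_of_le ?_ h1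
    exact_mod_cast Nat.lt_succ_self b

lemma le_Bfun {P : α → ℕ} {w : List α} {j k b : ℕ}
    (h : ∀ s : ℕ, s ≤ j + 1 → HasAnchPeriod P w s j k → b ≤ s) :
    (b : ℕ∞) ≤ Bfun P w j k := by
  unfold Bfun
  apply le_sInf
  rintro x ⟨s, rfl, hs, hanch⟩
  exact_mod_cast h s hs hanch

/-- For i-p < k ≤ i, the fragment w[b..i-1] is a k-anchored abelian run with
period P iff B_{i-1}[k] = b ≤ k - 2p and B_i[k] > b. -/
theorem anchoredRun_iff_B (P : α → ℕ) (w : List α) (i k b : ℕ)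
    (hi1 : 1 ≤ i) (hi2 : i < w.length)
    (hk1 : i < k + pnorm P) (hk2 : k ≤ i) :
    AnchoredRun P w b (i - 1) k ↔
      (Bfun P w (i - 1) k = (b : ℕ∞) ∧ b + 2 * pnorm P ≤ k ∧
        (b : ℕ∞) < Bfun P w i k) := by
  have hp : 0 < pnorm P := by omega
  have hii : i - 1 + 1 = i := by omega
  -- e is forced to k at endpoint E = i
  have heqk : ∀ s c e, SegChar P w s i c e → c % pnorm P = k % pnorm P → e = k := by
    intro s c e hch hmod
    have hmode : e % pnorm P = k % pnorm P := by
      obtain ⟨d, hd⟩ := hch.hdvd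
      have hce := hch.hce
      have he : e = c + pnorm P * d := by omega
      rw [he, Nat.add_mul_mod_self_left]
      exact hmod
    have h1 := hch.heE
    have h2 := hch.hEe
    exact eq_of_mod_eq' hp hmode (by omega) (by omega)
  -- upward closure producing a two-core factorization at endpoint i
  have hkey : ∀ s b', s ≤ b' → b' + 2 * pnorm P ≤ k → s ≤ i →
      HasAnchPeriod P w s (i-1) k → PeriodicAnch P w b' (i-1) k := by
    intro s b' hsb' hb2 hsi hanch
    obtain ⟨c, e, hch, hmod⟩ :=
      segchar_of_hasAnch (w := w) (E := i) hp hsi hi1 (le_of_lt hi2) hanch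
    have hek : e = k := heqk s c e hch hmod
    subst hek
    obtain ⟨c', hch', hcc', hmodc'⟩ :=
      segchar_mono hp (le_of_lt hi2) hch hsb' (by omega)
    have hc's := hch'.hcs
    have h2 : c' + 2 * pnorm P ≤ e :=
      two_p_le hp hch'.hdvd hch'.hce (by omega)
    exact (hasAnch_of_segchar hp hi1 (le_of_lt hi2) hch'
      (by rw [hmodc']; exact hmod)).2 h2
  -- upward closure producing a two-core factorization at endpoint i+1
  have hkey2 : ∀ s, s ≤ b → b + 2 * pnorm P ≤ k → s ≤ i + 1 →
      HasAnchPeriod P w s i k → PeriodicAnch P w b i k := by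
    intro s hsb hb2 hsi1 hanch
    have hE : (i+1) - 1 = i := by omega
    obtain ⟨c, e, hch, hmod⟩ :=
      segchar_of_hasAnch (w := w) (E := i+1) hp hsi1 (by omega) (by omega)
        (by rw [hE]; exact hanch)
    have hemod : e % pnorm P = k % pnorm P := by
      obtain ⟨d, hd⟩ := hch.hdvd
      have hce := hch.hce
      have he : e = c + pnorm P * d := by omega
      rw [he, Nat.add_mul_mod_self_left]
      exact hmod
    have hEe := hch.hEe
    have hke : k ≤ e := le_of_mod_eq' hp hemod (by omega)
    obtain ⟨c', hch', hcc', hmodc'⟩ :=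
      segchar_mono hp (by omega) hch hsb (by omega)
    have hc's := hch'.hcs
    have h2 : c' + 2 * pnorm P ≤ e :=
      two_p_le hp hch'.hdvd hch'.hce (by omega)
    have hres := (hasAnch_of_segchar (k := k) (E := i+1) hp (by omega) (by omega) hch'
      (by rw [hmodc']; exact hmod)).2 h2
    rwa [hE] at hres
  constructor
  · rintro ⟨hbi, -, hper, hleft, hright⟩
    obtain ⟨c, e, hch, hmod, h2p⟩ :=
      segchar_of_periodicAnch (w := w) (E := i) hp (by omega) hi1 (le_of_lt hi2) hper
    have hek : e = k := heqk b c e hch hmod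
    have hsc := hch.hsc
    have hb2 : b + 2 * pnorm P ≤ k := by omega
    have hrt : ¬ PeriodicAnch P w b i k := by
      rcases hright with h | h
      · rw [hii] at h; omega
      · rwa [hii] at h
    refine ⟨?_, hb2, ?_⟩
    · refine le_antisymm (Bfun_le (by omega) (hasAnch_of_periodicAnch hper)) ?_
      apply le_Bfun
      intro s hs hanch
      by_contra hc
      push_neg at hc
      rcases Nat.eq_zero_or_pos b with hb0 | hbpos
      · omega
      have hnl : ¬ PeriodicAnch P w (b-1) (i-1) k := by
        rcases hleft with h | h
        · omega
        · exact h
      exact hnl (hkey s (b-1) (by omega) (by omega) (by omega) hanch)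
    · rw [lt_Bfun_iff]
      intro s hsb hsi1 hanch
      exact hrt (hkey2 s hsb hb2 hsi1 hanch)
  · rintro ⟨hB, hb2, hlt⟩
    have hbk : b + 2 ≤ k := by omega
    have hne : ∃ s, s ≤ b ∧ s ≤ i ∧ HasAnchPeriod P w s (i-1) k := by
      by_contra hc
      push_neg at hc
      have : (b : ℕ∞) < Bfun P w (i-1) k := by
        rw [lt_Bfun_iff]
        intro s h1 h2 hanch
        exact hc s h1 (by omega) hanch
      rw [hB] at this
      exact lt_irrefl _ this
    obtain ⟨s0, hs0b, hs0i, hanch0⟩ := hne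
    have hperb : PeriodicAnch P w b (i-1) k := hkey s0 b hs0b hb2 hs0i hanch0
    refine ⟨by omega, by omega, hperb, ?_, ?_⟩
    · rcases Nat.eq_zero_or_pos b with hb0 | hbpos
      · exact Or.inl hb0
      · refine Or.inr fun hperb1 => ?_
        have h1 : Bfun P w (i-1) k ≤ ((b-1 : ℕ) : ℕ∞) :=
          Bfun_le (by omega) (hasAnch_of_periodicAnch hperb1)
        rw [hB] at h1
        have h2 : b ≤ b - 1 := by exact_mod_cast h1
        omega
    · refine Or.inr ?_
      rw [hii]
      intro hperbi
      have h1 : Bfun P w i k ≤ (b : ℕ∞) :=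
        Bfun_le (by omega) (hasAnch_of_periodicAnch hperbi)
      exact absurd hlt (not_lt.mpr h1)
end
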